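/- arXiv:1708.06014 — 2 statements merged into one kernel-verified Lean document; each statement's English description precedes it below -/
import Mathlib

section
/- Let p be an odd prime that is not a Wieferich prime, ζ a primitive p-th root of unity, and φ(z) = (z − 1)^p + 2 − ζ. Then for every m ≥ 1, the integer N_{ℚ(ζ)/ℚ}(φ^m(1)) is not a p-th power of an integer. -/
open NumberField Polynomial Module

private lemma prod_sub_prod_dvd' {ι R : Type*} [CommRing R] (s : Finset ι) (d : R)
    (f g : ι → R) :
    (∀ i ∈ s, d ∣ f i - g i) → d ∣ (∏ i ∈ s, f i) - ∏ i ∈ s, g i := by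
  classical
  induction s using Finset.induction_on with
  | empty => intro _; simp
  | @insert a s hx ih =>
    intro h
    rw [Finset.prod_insert hx, Finset.prod_insert hx]
    have h1 : d ∣ f a - g a := h a (Finset.mem_insert_self _ _)
    have h2 : d ∣ (∏ i ∈ s, f i) - ∏ i ∈ s, g i :=
      ih fun i hi => h i (Finset.mem_insert_of_mem hi)
    have hre : f a * ∏ i ∈ s, f i - g a * ∏ i ∈ s, g i
        = f a * ((∏ i ∈ s, f i) - ∏ i ∈ s, g i) + (f a - g a) * ∏ i ∈ s, g i := by ring
    rw [hre]
    exact dvd_add (h2.mul_left _) (h1.mul_right _)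

private lemma norm_two_sub_zeta_rat {p : ℕ+} [hp : Fact (p : ℕ).Prime] {K : Type*} [Field K]
    [Algebra ℚ K] [IsCyclotomicExtension {(p : ℕ)} ℚ K] {ζ : K} (hζ : IsPrimitiveRoot ζ (p : ℕ)) :
    Algebra.norm ℚ (2 - ζ) = ((2 ^ (p : ℕ) - 1 : ℤ) : ℚ) := by
  have hirr : Irreducible (cyclotomic (p : ℕ) ℚ) := cyclotomic.irreducible_rat p.pos
  haveI := IsCyclotomicExtension.neZero' p ℚ K
  let E := AlgebraicClosure K
  obtain ⟨z, hz⟩ := IsAlgClosed.exists_root (cyclotomic (p : ℕ) E)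
    (degree_cyclotomic_pos (p : ℕ) E p.pos).ne'
  apply (algebraMap ℚ E).injective
  letI := IsCyclotomicExtension.finiteDimensional {(p : ℕ)} ℚ K
  letI := IsCyclotomicExtension.isGalois {(p : ℕ)} ℚ K
  rw [Algebra.norm_eq_prod_embeddings]
  have Hprod : (∏ σ : K →ₐ[ℚ] E, σ (2 - ζ)) = eval 2 (cyclotomic' (p : ℕ) E) := by
    rw [cyclotomic', eval_prod, ← @Finset.prod_attach E E, ← Finset.univ_eq_attach]
    refine Fintype.prod_equiv (hζ.embeddingsEquivPrimitiveRoots E hirr) _ _ fun σ => ?_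
    simp [map_ofNat]
  haveI : NeZero ((p : ℕ) : E) := NeZero.of_faithfulSMul ℚ _ (p : ℕ)
  have heval : eval 2 (cyclotomic (p : ℕ) ℤ) = 2 ^ (p : ℕ) - 1 := by
    rw [cyclotomic_prime ℤ (p : ℕ)]
    rw [eval_finset_sum]
    simpa using geom_sum_mul (2 : ℤ) (p : ℕ)
  rw [Hprod, cyclotomic', ← cyclotomic_eq_prod_X_sub_primitiveRoots (isRoot_cyclotomic_iff.1 hz),
    cyclotomic_prime E (p : ℕ), eval_finset_sum]
  simp only [eval_pow, eval_X, map_intCast]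
  push_cast
  have hg := geom_sum_mul (2 : E) (p : ℕ)
  norm_num at hg
  linear_combination hg

theorem norm_iterate_not_pth_power (p : ℕ+) (hp : Fact (p : ℕ).Prime) (hodd : Odd (p : ℕ))
    (hw : (2 : ZMod ((p : ℕ) ^ 2)) ^ ((p : ℕ) - 1) ≠ 1)
    (K : Type*) [Field K] [Algebra ℚ K] [IsCyclotomicExtension {(p : ℕ)} ℚ K]
    (ζ : 𝓞 K) (hζ : IsPrimitiveRoot ζ (p : ℕ))
    (φ : 𝓞 K → 𝓞 K) (hφ : ∀ z, φ z = (z - 1) ^ (p : ℕ) + 2 - ζ) :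
    ∀ m : ℕ, 1 ≤ m → ¬ ∃ y : ℤ, Algebra.norm ℤ (φ^[m] 1) = y ^ (p : ℕ) := by
  intro m hm hy'
  obtain ⟨y, hy⟩ := hy'
  haveI : CharZero K := charZero_of_injective_algebraMap (algebraMap ℚ K).injective
  obtain rfl : ‹Algebra ℚ K› = DivisionRing.toRatAlgebra := Subsingleton.elim _ _
  set q : ℕ := (p : ℕ) with hq
  have hq0 : q ≠ 0 := hp.out.ne_zero
  have hq2 : q ≠ 2 := by
    rintro h
    rw [h] at hodd
    exact (by decide : ¬ Odd 2) hodd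
  have hp2 : p ≠ 2 := fun h => hq2 (by rw [hq, h]; rfl)
  haveI : NumberField K := IsCyclotomicExtension.numberField {(p : ℕ)} ℚ K
  letI := IsCyclotomicExtension.finiteDimensional {(p : ℕ)} ℚ K
  letI := IsCyclotomicExtension.isGalois {(p : ℕ)} ℚ K
  -- primitive root in K
  have hζK : IsPrimitiveRoot (algebraMap (𝓞 K) K ζ) q :=
    hζ.map_of_injective RingOfIntegers.coe_injective
  have htoint : hζK.toInteger = ζ := by
    apply RingOfIntegers.coe_injective
    rfl
  set η : 𝓞 K := ζ - 1 with hηdef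
  -- step 1 : η ∣ φ^[k+1] 1 - 1
  have step1 : ∀ k : ℕ, η ∣ φ^[k + 1] 1 - 1 := by
    intro k
    induction k with
    | zero =>
      rw [Function.iterate_one, hφ]
      have : (1 - 1 : 𝓞 K) ^ q + 2 - ζ - 1 = -η := by
        rw [hηdef]
        rw [sub_self, zero_pow hq0]
        ring
      rw [this]
      exact dvd_neg.mpr dvd_rfl
    | succ n ih =>
      rw [Function.iterate_succ_apply', hφ]
      have : (φ^[n + 1] 1 - 1) ^ q + 2 - ζ - 1 = (φ^[n + 1] 1 - 1) ^ q - η := by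
        rw [hηdef]; ring
      rw [this]
      exact dvd_sub (dvd_pow ih hq0) dvd_rfl
  -- φ at 1
  have hx1 : φ^[1] 1 = 2 - ζ := by
    rw [Function.iterate_one, hφ, sub_self, zero_pow hq0, zero_add]
  -- step 2 : η ^ q ∣ φ^[k] 1 - (2 - ζ) for k ≥ 1
  have step2 : η ^ q ∣ φ^[m] 1 - (2 - ζ) := by
    rcases Nat.exists_eq_add_of_le hm with ⟨n, hn⟩
    rcases n with _ | j
    · rw [hn, hx1, sub_self]
      exact dvd_zero _
    · have hmeq : m = (j + 1) + 1 := by omega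
      rw [hmeq, Function.iterate_succ_apply', hφ]
      have : (φ^[j + 1] 1 - 1) ^ q + 2 - ζ - (2 - ζ) = (φ^[j + 1] 1 - 1) ^ q := by ring
      rw [this]
      exact pow_dvd_pow_of_dvd (step1 j) q
  -- norm as product over galois restriction
  have normprod : ∀ x : 𝓞 K, (algebraMap ℤ (𝓞 K)) (Algebra.norm ℤ x)
      = ∏ σ : K ≃ₐ[ℚ] K, galRestrict ℤ ℚ K (𝓞 K) σ x := by
    intro x
    rw [prod_galRestrict_eq_norm]
    congr 1
    apply Int.cast_injective (α := ℚ)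
    have h1 := IsIntegralClosure.algebraMap_mk' ℤ (Algebra.norm ℚ (algebraMap (𝓞 K) K x))
      (Algebra.isIntegral_norm ℚ (IsIntegralClosure.isIntegral ℤ K x).algebraMap)
    have h2 := Algebra.coe_norm_int x
    rw [show ((Algebra.norm ℤ x : ℤ) : ℚ) = algebraMap ℤ ℚ (Algebra.norm ℤ x) from rfl] at h2
    rw [show (Int.cast : ℤ → ℚ) = algebraMap ℤ ℚ from rfl]
    rw [h1, h2]
  -- conjugates of η are divisible by η
  have hconj : ∀ σ : K ≃ₐ[ℚ] K, η ∣ galRestrict ℤ ℚ K (𝓞 K) σ η := by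
    intro σ
    haveI : NeZero q := ⟨hq0⟩
    have hpow : (galRestrict ℤ ℚ K (𝓞 K) σ ζ) ^ q = 1 := by
      rw [← map_pow, hζ.pow_eq_one, map_one]
    obtain ⟨i, _, hi⟩ := hζ.eq_pow_of_pow_eq_one hpow
    rw [hηdef, map_sub, map_one, ← hi]
    simpa using sub_dvd_pow_sub_pow ζ 1 i
  -- key divisibility
  have key : η ^ q ∣ (algebraMap ℤ (𝓞 K)) (Algebra.norm ℤ (φ^[m] 1) - Algebra.norm ℤ (2 - ζ)) := by
    rw [map_sub, normprod, normprod]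
    refine prod_sub_prod_dvd' _ _ _ _ fun σ _ => ?_
    obtain ⟨t, ht⟩ := step2
    have : galRestrict ℤ ℚ K (𝓞 K) σ (φ^[m] 1) - galRestrict ℤ ℚ K (𝓞 K) σ (2 - ζ)
        = (galRestrict ℤ ℚ K (𝓞 K) σ η) ^ q * galRestrict ℤ ℚ K (𝓞 K) σ t := by
      rw [← map_pow, ← map_mul, ← map_sub, ht]
    rw [this]
    exact Dvd.dvd.mul_right (pow_dvd_pow_of_dvd (hconj σ) q) _
  -- norm of η
  have normη : Algebra.norm ℤ η = (q : ℤ) := by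
    have h := IsPrimitiveRoot.norm_toInteger_sub_one_of_prime_ne_two' (p := p) (K := K) hζK hq2
    rw [htoint] at h
    exact_mod_cast h
  -- rank
  have hrank : finrank ℤ (𝓞 K) = q - 1 := by
    rw [RingOfIntegers.rank, IsCyclotomicExtension.finrank (n := p) K
      (cyclotomic.irreducible_rat p.pos), Nat.totient_prime hp.out]
  -- integer divisibility transfer
  have hint : ∀ n : ℤ, η ^ q ∣ (algebraMap ℤ (𝓞 K)) n → ((q : ℤ)) ^ 2 ∣ n := by
    intro n hn
    have h1 : (Algebra.norm ℤ η) ^ q ∣ Algebra.norm ℤ ((algebraMap ℤ (𝓞 K)) n) := by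
      rw [← map_pow]
      exact map_dvd (Algebra.norm ℤ) hn
    rw [Algebra.norm_algebraMap_of_basis (RingOfIntegers.basis K), normη] at h1
    have hcard : Fintype.card (Module.Free.ChooseBasisIndex ℤ (𝓞 K)) = q - 1 := by
      rw [← Module.finrank_eq_card_chooseBasisIndex, hrank]
    rw [hcard] at h1
    -- h1 : (q:ℤ)^q ∣ n ^ (q - 1)
    rcases eq_or_ne n 0 with rfl | hn0
    · exact dvd_zero _
    have hna : q ^ q ∣ n.natAbs ^ (q - 1) := by
      have := Int.natAbs_dvd_natAbs.mpr h1
      simpa [Int.natAbs_pow] using this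
    have hane : n.natAbs ≠ 0 := Int.natAbs_ne_zero.mpr hn0
    have hfac : q ≤ (n.natAbs ^ (q - 1)).factorization q :=
      (Nat.Prime.pow_dvd_iff_le_factorization hp.out (pow_ne_zero _ hane)).mp hna
    rw [Nat.factorization_pow] at hfac
    have hv : 2 ≤ n.natAbs.factorization q := by
      by_contra hlt
      push_neg at hlt
      have h3 : (q - 1) * n.natAbs.factorization q ≤ (q - 1) * 1 :=
        Nat.mul_le_mul_left _ (by omega)
      simp only [Finsupp.smul_apply, smul_eq_mul] at hfac
      have h4 : q ≤ q - 1 := le_trans hfac (by simpa using h3)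
      omega
    have : q ^ 2 ∣ n.natAbs := (Nat.Prime.pow_dvd_iff_le_factorization hp.out hane).mpr hv
    have h2 : ((q : ℤ)) ^ 2 ∣ (n.natAbs : ℤ) := by exact_mod_cast Int.natCast_dvd_natCast.mpr this
    exact (Int.dvd_natAbs).mp h2
  -- norm of 2 - ζ
  have norm21 : Algebra.norm ℤ (2 - ζ) = 2 ^ q - 1 := by
    apply Int.cast_injective (α := ℚ)
    rw [Algebra.coe_norm_int]
    have hcoe : ((2 - ζ : 𝓞 K) : K) = 2 - (algebraMap (𝓞 K) K) ζ := by
      push_cast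
      rfl
    rw [hcoe, norm_two_sub_zeta_rat hζK]
  -- conclude : q^2 ∣ y^q - (2^q - 1)
  have hdvd : ((q : ℤ)) ^ 2 ∣ y ^ q - (2 ^ q - 1) := by
    have := hint _ key
    rwa [hy, norm21] at this
  -- q ∣ y - 1
  have hy1 : (q : ℤ) ∣ y - 1 := by
    have hpd : (q : ℤ) ∣ y ^ q - (2 ^ q - 1) :=
      dvd_trans (dvd_pow_self _ (by norm_num)) hdvd
    have h0 : ((y ^ q - (2 ^ q - 1) : ℤ) : ZMod q) = 0 :=
      (ZMod.intCast_zmod_eq_zero_iff_dvd _ _).mpr (by exact_mod_cast hpd)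
    push_cast at h0
    rw [ZMod.pow_card] at h0
    have h2 : ((2 : ZMod q)) ^ q = 2 := ZMod.pow_card 2
    rw [h2] at h0
    rw [← ZMod.intCast_zmod_eq_zero_iff_dvd]
    push_cast
    linear_combination h0
  -- q^2 ∣ y^q - 1
  have hyq : ((q : ℤ)) ^ 2 ∣ y ^ q - 1 := by
    have := dvd_sub_pow_of_dvd_sub (p := q) (a := y) (b := 1) (by exact_mod_cast hy1) 1
    simpa using this
  -- q^2 ∣ 2^q - 2
  have h2q : ((q : ℤ)) ^ 2 ∣ 2 ^ q - 2 := by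
    have := dvd_sub hyq hdvd
    have heq : (y ^ q - 1) - (y ^ q - (2 ^ q - 1)) = 2 ^ q - 2 := by ring
    rwa [heq] at this
  -- q^2 ∣ 2^(q-1) - 1
  have hfin : ((q : ℤ)) ^ 2 ∣ 2 ^ (q - 1) - 1 := by
    have hexp : (2 : ℤ) ^ q - 2 = 2 * (2 ^ (q - 1) - 1) := by
      have h5 : (2 : ℤ) ^ q = 2 ^ (q - 1) * 2 := by
        conv_lhs => rw [show q = (q - 1) + 1 by omega]
        rw [pow_succ]
      rw [h5]
      ring
    rw [hexp] at h2q
    have hcop : IsCoprime ((q : ℤ)) 2 := by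
      rw [Int.isCoprime_iff_gcd_eq_one]
      have : Nat.Coprime q 2 := Nat.coprime_two_right.mpr hodd
      simpa [Int.gcd] using this
    exact hcop.pow_left.dvd_of_dvd_mul_left h2q
  -- contradiction with non-Wieferich
  apply hw
  have h0 : ((2 ^ (q - 1) - 1 : ℤ) : ZMod (q ^ 2)) = 0 := by
    rw [ZMod.intCast_zmod_eq_zero_iff_dvd]
    exact_mod_cast hfin
  push_cast at h0
  linear_combination h0
end

section
/- Let p be an odd prime that is not a Wieferich prime, ζ a primitive p-th root of unity, and φ(z) = (z − 1)^p + 2 − ζ. Then for every m ≥ 1, φ^m(1) is not a unit in ℤ[ζ]. -/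
open NumberField Polynomial Finset

section auxlemmas

/-- In a commutative ring, if `a` divides `f i - g i` for all `i ∈ s`, then `a` divides the
difference of the products. -/
lemma dvd_prod_sub_prod {R : Type*} [CommRing R] {ι : Type*} (s : Finset ι)
    (f g : ι → R) {a : R} (h : ∀ i ∈ s, a ∣ f i - g i) :
    a ∣ ∏ i ∈ s, f i - ∏ i ∈ s, g i := by
  classical
  induction s using Finset.induction_on with
  | empty => simp
  | insert j s hj ih =>
    rw [Finset.prod_insert hj, Finset.prod_insert hj]
    have key : f j * ∏ i ∈ s, f i - g j * ∏ i ∈ s, g i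
        = (f j - g j) * ∏ i ∈ s, f i + g j * (∏ i ∈ s, f i - ∏ i ∈ s, g i) := by ring
    rw [key]
    exact dvd_add ((h j (Finset.mem_insert_self j s)).mul_right _)
      ((ih fun i hi => h i (Finset.mem_insert_of_mem hi)).mul_left _)

/-- Norm of `2 - ζ` in a cyclotomic extension is the evaluation of the cyclotomic polynomial
at `2`. -/
lemma norm_two_sub_zeta {p : ℕ+} {K L : Type*} [Field K] [Field L] [Algebra K L] {ζ : L}
    [IsCyclotomicExtension {(p : ℕ)} K L]
    (hζ : IsPrimitiveRoot ζ (p : ℕ)) (hirr : Irreducible (cyclotomic p K)) :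
    Algebra.norm K ((2 : L) - ζ) = algebraMap ℤ K ((cyclotomic p ℤ).eval 2) := by
  haveI := IsCyclotomicExtension.neZero' p K L
  let E := AlgebraicClosure L
  obtain ⟨z, hz⟩ := IsAlgClosed.exists_root (cyclotomic p E)
    (degree_cyclotomic_pos p E p.pos).ne.symm
  apply (algebraMap K E).injective
  letI := IsCyclotomicExtension.finiteDimensional {(p : ℕ)} K L
  letI := IsCyclotomicExtension.isGalois {(p : ℕ)} K L
  rw [Algebra.norm_eq_prod_embeddings]
  have Hprod : (∏ σ : L →ₐ[K] E, σ ((2 : L) - ζ)) = eval 2 (cyclotomic' p E) := by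
    rw [cyclotomic', eval_prod, ← @Finset.prod_attach E E, ← univ_eq_attach]
    refine Fintype.prod_equiv (hζ.embeddingsEquivPrimitiveRoots E hirr) _ _ fun σ => ?_
    simp [map_ofNat]
  haveI : NeZero ((p : ℕ) : E) := NeZero.of_faithfulSMul K _ (p : ℕ)
  rw [Hprod, cyclotomic', ← cyclotomic_eq_prod_X_sub_primitiveRoots (isRoot_cyclotomic_iff.1 hz),
    ← map_cyclotomic_int]
  have h2 : ((2 : ℤ) : E) = (2 : E) := by norm_num
  rw [← h2, eval_intCast_map]
  rw [← IsScalarTower.algebraMap_apply ℤ K E]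
  simp

end auxlemmas

theorem iterate_not_unit (p : ℕ+) (hp : Fact (p : ℕ).Prime) (hodd : Odd (p : ℕ))
    (hw : (2 : ZMod ((p : ℕ) ^ 2)) ^ ((p : ℕ) - 1) ≠ 1)
    (K : Type*) [Field K] [Algebra ℚ K] [IsCyclotomicExtension {(p : ℕ)} ℚ K]
    (ζ : 𝓞 K) (hζ : IsPrimitiveRoot ζ (p : ℕ))
    (φ : 𝓞 K → 𝓞 K) (hφ : ∀ z, φ z = (z - 1) ^ (p : ℕ) + 2 - ζ) :
    ∀ m : ℕ, 1 ≤ m → ¬ IsUnit (φ^[m] 1) := by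
  rename_i instField instAlg instCyc
  haveI hchar : CharZero K := charZero_of_injective_algebraMap (algebraMap ℚ K).injective
  have halg : instAlg = DivisionRing.toRatAlgebra := Subsingleton.elim _ _
  rw [halg] at instCyc
  clear halg instAlg
  intro m hm hu
  haveI : NumberField K := IsCyclotomicExtension.numberField {(p : ℕ)} ℚ K
  haveI : IsGalois ℚ K := IsCyclotomicExtension.isGalois {(p : ℕ)} ℚ K
  haveI : NeZero (p : ℕ) := ⟨hp.out.pos.ne'⟩
  have hirr : Irreducible (cyclotomic p ℚ) := cyclotomic.irreducible_rat p.pos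
  have hpne2 : (p : ℕ) ≠ 2 := by
    intro h; rw [h] at hodd; exact absurd (Nat.odd_iff.mp hodd) (by norm_num)
  set lam : 𝓞 K := ζ - 1 with hlam
  -- the primitive root inside K
  have hζK : IsPrimitiveRoot (algebraMap (𝓞 K) K ζ) (p : ℕ) :=
    hζ.map_of_injective (RingOfIntegers.coe_injective)
  -- Step 1 : all iterates are ≡ 2 - ζ mod lam ^ p
  have key : ∀ k : ℕ, lam ∣ φ^[k + 1] 1 - 1 ∧ lam ^ (p : ℕ) ∣ φ^[k + 1] 1 - (2 - ζ) := by
    intro k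
    induction k with
    | zero =>
      have h : φ^[1] 1 = 2 - ζ := by
        rw [Function.iterate_one, hφ 1]
        simp [zero_pow hp.out.pos.ne']
      rw [h]
      exact ⟨⟨-1, by rw [hlam]; ring⟩, ⟨0, by ring⟩⟩
    | succ n ih =>
      obtain ⟨h1, _⟩ := ih
      rw [Function.iterate_succ_apply', hφ]
      set x := φ^[n + 1] 1
      constructor
      · obtain ⟨c, hc⟩ : lam ∣ (x - 1) ^ (p : ℕ) := dvd_pow h1 hp.out.pos.ne'
        exact ⟨c - 1, by rw [hlam] at hc ⊢; rw [hc]; ring⟩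
      · have h : (x - 1) ^ (p : ℕ) + 2 - ζ - (2 - ζ) = (x - 1) ^ (p : ℕ) := by ring
        rw [h]
        exact pow_dvd_pow_of_dvd h1 _
  obtain ⟨k, rfl⟩ : ∃ k, m = k + 1 := ⟨m - 1, by omega⟩
  set x := φ^[k + 1] 1 with hxdef
  obtain ⟨-, hx2⟩ := key k
  -- norms
  have hNu : IsUnit (Algebra.norm ℤ x) := hu.map (Algebra.norm ℤ)
  have hlamnorm : Algebra.norm ℤ lam = (p : ℤ) := by
    have hne2 : p ≠ 2 := by
      intro h
      exact hpne2 (by rw [h]; rfl)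
    have h := hζK.norm_toInteger_sub_one_of_prime_ne_two' hpne2
    have htoint : hζK.toInteger = ζ := by
      ext
      simp [IsPrimitiveRoot.toInteger, RingOfIntegers.coe_eq_algebraMap]
      rfl
    rwa [htoint] at h
  have h2norm : Algebra.norm ℤ ((2 : 𝓞 K) - ζ) = 2 ^ (p : ℕ) - 1 := by
    have hcoe := Algebra.coe_norm_int (K := K) ((2 : 𝓞 K) - ζ)
    have himg : (((2 : 𝓞 K) - ζ : 𝓞 K) : K) = (2 : K) - algebraMap (𝓞 K) K ζ := by
      rw [RingOfIntegers.coe_eq_algebraMap, map_sub, map_ofNat]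
    rw [himg, norm_two_sub_zeta hζK hirr] at hcoe
    have heval : (cyclotomic (p : ℕ) ℤ).eval 2 = 2 ^ (p : ℕ) - 1 := by
      rw [cyclotomic_prime ℤ (p : ℕ)]
      have hgeom := geom_sum_mul (2 : ℤ) (p : ℕ)
      simp only [eval_finset_sum, eval_pow, eval_X]
      linarith [hgeom]
    rw [heval] at hcoe
    have : ((Algebra.norm ℤ ((2 : 𝓞 K) - ζ) : ℤ) : ℚ) = (((2 ^ (p : ℕ) - 1 : ℤ)) : ℚ) := by
      rw [hcoe]; simp
    exact_mod_cast this
  -- product over automorphisms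
  have hprod : ∀ y : 𝓞 K, algebraMap ℤ (𝓞 K) (Algebra.norm ℤ y)
      = ∏ σ : K ≃ₐ[ℚ] K, galRestrict ℤ ℚ K (𝓞 K) σ y := by
    intro y
    apply RingOfIntegers.coe_injective
    rw [map_prod]
    have hmaps : ∀ σ : K ≃ₐ[ℚ] K,
        algebraMap (𝓞 K) K (galRestrict ℤ ℚ K (𝓞 K) σ y) = σ (algebraMap (𝓞 K) K y) := fun σ =>
      algebraMap_galRestrict_apply ℤ σ y
    rw [Finset.prod_congr rfl fun σ _ => hmaps σ, ← Algebra.norm_eq_prod_automorphisms]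
    have hy : algebraMap (𝓞 K) K y = (y : K) := rfl
    rw [hy, ← Algebra.coe_norm_int]
    rw [← IsScalarTower.algebraMap_apply ℤ (𝓞 K) K]
    simp [IsScalarTower.algebraMap_apply ℤ ℚ K]
  -- the congruence mod lam^p between the two norms
  set d : ℤ := Algebra.norm ℤ x - Algebra.norm ℤ ((2 : 𝓞 K) - ζ) with hd
  have hcong : lam ^ (p : ℕ) ∣ algebraMap ℤ (𝓞 K) d := by
    rw [hd, map_sub, hprod x, hprod ((2 : 𝓞 K) - ζ)]
    refine dvd_prod_sub_prod _ _ _ fun σ _ => ?_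
    rw [← map_sub]
    obtain ⟨t, ht⟩ := hx2
    rw [ht, map_mul, map_pow]
    have hζpow : (galRestrict ℤ ℚ K (𝓞 K) σ ζ) ^ (p : ℕ) = 1 := by
      rw [← map_pow, hζ.pow_eq_one, map_one]
    obtain ⟨i, _, hie⟩ := hζ.eq_pow_of_pow_eq_one hζpow
    have hdvd : lam ∣ galRestrict ℤ ℚ K (𝓞 K) σ lam := by
      have h : galRestrict ℤ ℚ K (𝓞 K) σ lam = ζ ^ i - 1 := by
        rw [hlam, map_sub, map_one, hie]
      rw [h, hlam]
      simpa using sub_dvd_pow_sub_pow ζ 1 i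
    exact Dvd.dvd.mul_right (pow_dvd_pow_of_dvd hdvd _) _
  -- descent : p^2 divides d
  have hfinrank : Module.finrank ℤ (𝓞 K) = (p : ℕ) - 1 := by
    rw [RingOfIntegers.rank, IsCyclotomicExtension.finrank K hirr, Nat.totient_prime hp.out]
  have hdesc : ((p : ℕ) : ℤ) ^ 2 ∣ d := by
    rcases eq_or_ne d 0 with h0 | hd0
    · simp [h0]
    have hdd : ((p : ℕ) : ℤ) ^ (p : ℕ) ∣ d ^ ((p : ℕ) - 1) := by
      have hmap := map_dvd (Algebra.norm ℤ (S := 𝓞 K)) hcong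
      have hval := Algebra.norm_algebraMap_of_basis (Module.Free.chooseBasis ℤ (𝓞 K)) d
      rw [← Module.finrank_eq_card_chooseBasisIndex, hfinrank] at hval
      rwa [map_pow, hlamnorm, hval] at hmap
    have hnat : ((p : ℕ)) ^ (p : ℕ) ∣ d.natAbs ^ ((p : ℕ) - 1) := by
      have h := Int.natAbs_dvd_natAbs.mpr hdd
      simpa [Int.natAbs_pow] using h
    have hfac : (p : ℕ) ≤ ((p : ℕ) - 1) * d.natAbs.factorization (p : ℕ) := by
      have h := (Nat.Prime.pow_dvd_iff_le_factorization hp.out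
        (pow_ne_zero _ (Int.natAbs_ne_zero.mpr hd0))).mp hnat
      rwa [Nat.factorization_pow, Finsupp.smul_apply, smul_eq_mul] at h
    have hk2 : 2 ≤ d.natAbs.factorization (p : ℕ) := by
      by_contra h
      push_neg at h
      have h1 : ((p : ℕ) - 1) * d.natAbs.factorization (p : ℕ) ≤ ((p : ℕ) - 1) * 1 :=
        Nat.mul_le_mul_left _ (by omega)
      have := hp.out.two_le
      omega
    have h2 : (p : ℕ) ^ 2 ∣ d.natAbs :=
      (Nat.Prime.pow_dvd_iff_le_factorization hp.out (Int.natAbs_ne_zero.mpr hd0)).mpr hk2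
    exact Int.natAbs_dvd_natAbs.mp (by simpa [Int.natAbs_pow] using h2)
  -- finish
  rw [hd, h2norm] at hdesc
  rcases Int.isUnit_iff.mp hNu with h1 | h1 <;> rw [h1] at hdesc
  · -- p^2 ∣ 1 - (2^p - 1) = 2 - 2^p : contradict non-Wieferich
    have hzmod : ((1 - (2 ^ (p : ℕ) - 1) : ℤ) : ZMod ((p : ℕ) ^ 2)) = 0 := by
      rw [ZMod.intCast_zmod_eq_zero_iff_dvd]
      exact_mod_cast hdesc
    push_cast at hzmod
    have hp1 : (p : ℕ) - 1 + 1 = (p : ℕ) := by have := hp.out.pos; omega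
    have hsplit : (2 : ZMod ((p : ℕ) ^ 2)) ^ (p : ℕ) = 2 * 2 ^ ((p : ℕ) - 1) := by
      calc (2 : ZMod ((p : ℕ) ^ 2)) ^ (p : ℕ) = 2 ^ ((p : ℕ) - 1 + 1) := by rw [hp1]
        _ = 2 * 2 ^ ((p : ℕ) - 1) := by rw [pow_succ]; ring
    have h2unit : IsUnit (2 : ZMod ((p : ℕ) ^ 2)) := by
      have h := ZMod.isUnit_iff_coprime 2 ((p : ℕ) ^ 2)
      have hcop : Nat.Coprime 2 ((p : ℕ) ^ 2) := Nat.coprime_two_left.mpr hodd.pow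
      have := h.mpr hcop
      simpa using this
    apply hw
    have heq : (2 : ZMod ((p : ℕ) ^ 2)) * 1 = 2 * 2 ^ ((p : ℕ) - 1) := by
      rw [mul_one, ← hsplit]
      have h2 : (2 : ZMod ((p : ℕ) ^ 2)) - 2 ^ (p : ℕ) = 0 := by linear_combination hzmod
      linear_combination h2
    exact (h2unit.mul_left_cancel heq).symm
  · -- p^2 ∣ -1 - (2^p - 1) = -2^p : impossible
    have hdvd2 : ((p : ℕ) : ℤ) ^ 2 ∣ (2 : ℤ) ^ (p : ℕ) := by
      have h : (-1 - (2 ^ (p : ℕ) - 1) : ℤ) = -(2 ^ (p : ℕ)) := by ring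
      rw [h, dvd_neg] at hdesc
      exact hdesc
    have hnat : (p : ℕ) ^ 2 ∣ 2 ^ (p : ℕ) := by exact_mod_cast hdvd2
    have hpdvd : (p : ℕ) ∣ 2 ^ (p : ℕ) := dvd_trans (dvd_pow_self _ (by norm_num)) hnat
    have hdvd' := hp.out.dvd_of_dvd_pow hpdvd
    exact hpne2 ((Nat.prime_dvd_prime_iff_eq hp.out Nat.prime_two).mp hdvd')
end
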